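/- Let d ≥ 1 and let ν be a positive Borel measure on ℝ^d with ν({0}) = 0. For ε > 0 define ν_ε(A) = ν(εA), where εA = {εx : x ∈ A}, and assume each ν_ε is admissible; set C_ε = ∫_{ℝ^d} min(1,|x|) ν_ε(dx) and assume C_ε > 0. Suppose the function ℓ(s) = ν({x : |x| > s}) is finite and positive for small s > 0 and is slowly varying at zero, i.e. for every λ > 0, ℓ(λs)/ℓ(s) → 1 as s → 0⁺. Let E ⊂ ℝ^d be a Borel set of finite Lebesgue measure whose covariance function g_E is Lipschitz continuous (this holds whenever E also has finite classical perimeter). Then lim_{ε→0⁺} C_ε^{−1} Per_{ν_ε}(E) = |E|. -/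

import Mathlib

open MeasureTheory Filter Topology ENNReal NNReal

/-- The non-local `ν`-perimeter: `Per_ν(E) = ∫_E ν(Eᶜ − x) dx`. -/
noncomputable def nuPer {d : ℕ} (ν : Measure (EuclideanSpace ℝ (Fin d)))
    (E : Set (EuclideanSpace ℝ (Fin d))) : ℝ≥0∞ :=
  ∫⁻ x in E, ν {y | x + y ∈ Eᶜ}

/-- The covariance function `g_E(y) = |E ∩ (E + y)|` of a set `E`. -/
noncomputable def covFn {d : ℕ} (E : Set (EuclideanSpace ℝ (Fin d)))
    (y : EuclideanSpace ℝ (Fin d)) : ℝ≥0∞ :=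
  volume (E ∩ {x | x - y ∈ E})

/-- The rescaled measure `ν_ε(A) = ν(εA)`, realized as the pushforward of `ν`
under `x ↦ ε⁻¹ x`. -/
noncomputable def rescale {d : ℕ} (ν : Measure (EuclideanSpace ℝ (Fin d)))
    (ε : ℝ) : Measure (EuclideanSpace ℝ (Fin d)) :=
  Measure.map (fun x => ε⁻¹ • x) ν

namespace St14
variable {d : ℕ}
local notation "V" => EuclideanSpace ℝ (Fin d)

lemma meas_tail (s : ℝ) : MeasurableSet {x : V | s < ‖x‖} :=
  (isOpen_lt continuous_const continuous_norm).measurableSet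

lemma meas_ball (s : ℝ) : MeasurableSet {x : V | ‖x‖ ≤ s} :=
  (isClosed_le continuous_norm continuous_const).measurableSet

lemma rescale_apply (ν : Measure V) (ε : ℝ) {S : Set V} (hS : MeasurableSet S) :
    rescale ν ε S = ν ((fun x : V => ε⁻¹ • x) ⁻¹' S) :=
  Measure.map_apply (measurable_const_smul _) hS

lemma rescale_tail (ν : Measure V) {ε : ℝ} (hε : 0 < ε) (s : ℝ) :
    rescale ν ε {x : V | s < ‖x‖} = ν {x : V | ε * s < ‖x‖} := by
  rw [rescale_apply ν ε (meas_tail s)]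
  congr 1
  ext x
  simp only [Set.mem_preimage, Set.mem_setOf_eq, norm_smul, norm_inv, Real.norm_eq_abs,
    abs_of_pos hε]
  rw [lt_inv_mul_iff₀ hε]

lemma rescale_zero (ν : Measure V) {ε : ℝ} (hε : 0 < ε) :
    rescale ν ε {0} = ν {0} := by
  rw [rescale_apply ν ε (measurableSet_singleton 0)]
  congr 1
  ext x
  simp [smul_eq_zero, inv_eq_zero, hε.ne']

lemma sigmaFinite_of_tails (μ : Measure V)
    (h : ∀ s : ℝ, 0 < s → μ {x : V | s < ‖x‖} < ⊤) (h0 : μ {0} = 0) :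
    SigmaFinite μ := by
  refine ⟨⟨⟨fun n => {x : V | (1:ℝ)/(n+1) < ‖x‖} ∪ {0}, fun _ => trivial, ?_, ?_⟩⟩⟩
  · intro n
    refine lt_of_le_of_lt (measure_union_le _ _) ?_
    rw [h0]
    simpa using h (1/(n+1)) (by positivity)
  · ext x
    simp only [Set.mem_iUnion, Set.mem_union, Set.mem_setOf_eq, Set.mem_singleton_iff,
      Set.mem_univ, iff_true]
    by_cases hx : x = 0
    · exact ⟨0, Or.inr hx⟩
    · have hn : 0 < ‖x‖ := norm_pos_iff.2 hx
      obtain ⟨n, hn'⟩ := exists_nat_one_div_lt hn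
      exact ⟨n, Or.inl hn'⟩

lemma covFn_le (E : Set V) (y : V) : covFn E y ≤ volume E :=
  measure_mono Set.inter_subset_left

lemma covFn_zero (E : Set V) : covFn E 0 = volume E := by
  unfold covFn
  congr 1
  ext x; simp

lemma nuPer_eq (μ : Measure V) [SigmaFinite μ] {E : Set V} (hE : MeasurableSet E)
    (hEvol : volume E < ⊤) :
    nuPer μ E = ∫⁻ y, (volume E - covFn E (-y)) ∂μ := by
  have hind : ∀ x y : V, Eᶜ.indicator (fun _ => (1:ℝ≥0∞)) (x + y)
      = ((fun y : V => x + y) ⁻¹' Eᶜ).indicator (fun _ => (1:ℝ≥0∞)) y := by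
    intro x y
    by_cases h : x + y ∈ E <;> simp [h]
  have h1 : ∀ x : V, μ {y : V | x + y ∈ Eᶜ}
      = ∫⁻ y, Eᶜ.indicator (fun _ => (1:ℝ≥0∞)) (x + y) ∂μ := by
    intro x
    have hm : MeasurableSet ((fun y : V => x + y) ⁻¹' Eᶜ) :=
      hE.compl.preimage (measurable_const_add x)
    simp only [hind x]
    rw [lintegral_indicator hm, setLIntegral_one]
    rfl
  have hswap : ∫⁻ x in E, ∫⁻ y, Eᶜ.indicator (fun _ => (1:ℝ≥0∞)) (x + y) ∂μ ∂volume
      = ∫⁻ y, ∫⁻ x in E, Eᶜ.indicator (fun _ => (1:ℝ≥0∞)) (x + y) ∂volume ∂μ := by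
    apply lintegral_lintegral_swap
    apply Measurable.aemeasurable
    exact (measurable_const.indicator hE.compl).comp (measurable_fst.add measurable_snd)
  have h2 : ∀ y : V, ∫⁻ x in E, Eᶜ.indicator (fun _ => (1:ℝ≥0∞)) (x + y) ∂volume
      = volume E - covFn E (-y) := by
    intro y
    have hind2 : ∀ x : V, Eᶜ.indicator (fun _ => (1:ℝ≥0∞)) (x + y)
        = ((fun x : V => x + y) ⁻¹' Eᶜ).indicator (fun _ => (1:ℝ≥0∞)) x := by
      intro x
      by_cases h : x + y ∈ E <;> simp [h]
    have hm : MeasurableSet ((fun x : V => x + y) ⁻¹' Eᶜ) :=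
      hE.compl.preimage (measurable_add_const y)
    simp only [hind2]
    rw [lintegral_indicator hm, setLIntegral_one, Measure.restrict_apply hm]
    have hset : (fun x : V => x + y) ⁻¹' Eᶜ ∩ E = E \ {x : V | x + y ∈ E} := by
      ext x; simp [Set.mem_preimage, Set.mem_diff, and_comm]
    rw [hset]
    have hcov : covFn E (-y) = volume (E ∩ {x : V | x + y ∈ E}) := by
      unfold covFn; congr 1; ext x; simp [sub_neg_eq_add]
    rw [hcov]
    have := measure_inter_add_diff (μ := volume) E
      (hE.preimage (measurable_add_const y) : MeasurableSet {x : V | x + y ∈ E})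
    refine ENNReal.eq_sub_of_add_eq ?_ ?_
    · exact (lt_of_le_of_lt (measure_mono Set.inter_subset_left) hEvol).ne
    · rw [add_comm]; exact this
  unfold nuPer
  calc ∫⁻ x in E, μ {y | x + y ∈ Eᶜ} ∂volume
      = ∫⁻ x in E, ∫⁻ y, Eᶜ.indicator (fun _ => (1:ℝ≥0∞)) (x + y) ∂μ ∂volume :=
        lintegral_congr fun x => h1 x
    _ = ∫⁻ y, ∫⁻ x in E, Eᶜ.indicator (fun _ => (1:ℝ≥0∞)) (x + y) ∂volume ∂μ := hswap
    _ = ∫⁻ y, (volume E - covFn E (-y)) ∂μ := lintegral_congr fun y => h2 y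

lemma covFn_lip {E : Set V} (hEvol : volume E < ⊤) {L : ℝ≥0}
    (hLip : LipschitzWith L fun y => (covFn E y).toReal) (z : V) :
    volume E - covFn E z ≤ ENNReal.ofReal (L * ‖z‖) := by
  have hfin : covFn E z ≠ ⊤ := (lt_of_le_of_lt (covFn_le E z) hEvol).ne
  rw [tsub_le_iff_right]
  have hd : (volume E).toReal - (covFn E z).toReal ≤ L * ‖z‖ := by
    have := hLip.dist_le_mul 0 z
    rw [dist_zero_left] at this
    have h2 : dist ((covFn E 0).toReal) ((covFn E z).toReal) ≤ L * ‖z‖ := this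
    rw [covFn_zero, Real.dist_eq] at h2
    exact (le_abs_self _).trans h2
  calc volume E = ENNReal.ofReal ((volume E).toReal) := (ENNReal.ofReal_toReal hEvol.ne).symm
    _ ≤ ENNReal.ofReal (L * ‖z‖ + (covFn E z).toReal) := by
        apply ENNReal.ofReal_le_ofReal; linarith
    _ ≤ ENNReal.ofReal (L * ‖z‖) + ENNReal.ofReal ((covFn E z).toReal) :=
        ENNReal.ofReal_add_le
    _ = ENNReal.ofReal (L * ‖z‖) + covFn E z := by rw [ENNReal.ofReal_toReal hfin]

lemma covFn_tail {E : Set V} (hE : MeasurableSet E) (hEvol : volume E < ⊤)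
    {η : ℝ≥0∞} (hη : 0 < η) :
    ∃ M : ℝ, 1 ≤ M ∧ ∀ z : V, M ≤ ‖z‖ → covFn E z ≤ η := by
  have htend : Tendsto (fun n : ℕ => volume (E \ Metric.closedBall (0:V) n)) atTop
      (𝓝 (volume (⋂ n : ℕ, E \ Metric.closedBall (0:V) n))) := by
    apply tendsto_measure_iInter_atTop
    · exact fun n => (hE.diff measurableSet_closedBall).nullMeasurableSet
    · intro m n hmn
      apply Set.diff_subset_diff_right
      exact Metric.closedBall_subset_closedBall (by exact_mod_cast hmn)
    · exact ⟨0, (lt_of_le_of_lt (measure_mono Set.diff_subset) hEvol).ne⟩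
  have hempty : (⋂ n : ℕ, E \ Metric.closedBall (0:V) n) = ∅ := by
    ext x
    simp only [Set.mem_iInter, Set.mem_diff, Metric.mem_closedBall, Set.mem_empty_iff_false,
      iff_false, not_forall]
    obtain ⟨n, hn⟩ := exists_nat_ge (dist x 0)
    exact ⟨n, fun h => absurd hn (not_le.2 (lt_of_not_ge (fun hle => h.2 hle)))⟩
  rw [hempty, measure_empty] at htend
  have h2 : 0 < η / 2 := ENNReal.half_pos hη.ne'
  obtain ⟨n, hn⟩ := ((tendsto_order.1 htend).2 (η/2) h2).exists
  refine ⟨2*n+1, by linarith [Nat.cast_nonneg (α := ℝ) n], fun z hz => ?_⟩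
  set S := E \ Metric.closedBall (0:V) n with hS
  have hsub : E ∩ {x : V | x - z ∈ E} ⊆ S ∪ ((fun x : V => x + (-z)) ⁻¹' S) := by
    rintro x ⟨hx, hxz⟩
    by_cases hb : x ∈ Metric.closedBall (0:V) n
    · right
      simp only [Set.mem_preimage, ← sub_eq_add_neg]
      refine ⟨hxz, ?_⟩
      simp only [Metric.mem_closedBall, dist_zero_right] at hb ⊢
      intro hcon
      have : ‖z‖ ≤ ‖x‖ + ‖x - z‖ := by
        have := norm_sub_le x (x - z)
        simpa using this
      linarith [hz, hb, hcon]
    · exact Or.inl ⟨hx, hb⟩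
  calc covFn E z ≤ volume (S ∪ ((fun x : V => x + (-z)) ⁻¹' S)) := measure_mono hsub
    _ ≤ volume S + volume ((fun x : V => x + (-z)) ⁻¹' S) := measure_union_le _ _
    _ = volume S + volume S := by rw [measure_preimage_add_right]
    _ ≤ η/2 + η/2 := add_le_add hn.le hn.le
    _ = η := ENNReal.add_halves η

lemma dyadic_bound (μ : Measure V) {δ : ℝ} (hδ : 0 < δ)
    (hdbl : ∀ k : ℕ, μ {x : V | δ/2^(k+1) < ‖x‖}
      ≤ ENNReal.ofReal (3/2) * μ {x : V | δ/2^k < ‖x‖}) :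
    ∫⁻ y in {y : V | 0 < ‖y‖ ∧ ‖y‖ ≤ δ}, ENNReal.ofReal ‖y‖ ∂μ
      ≤ ENNReal.ofReal (6*δ) * μ {x : V | δ < ‖x‖} := by
  set T : ℕ → ℝ≥0∞ := fun k => μ {x : V | δ/2^k < ‖x‖} with hT
  have hTbound : ∀ k : ℕ, T k ≤ ENNReal.ofReal (3/2) ^ k * T 0 := by
    intro k
    induction k with
    | zero => simp
    | succ m ih =>
      calc T (m+1) ≤ ENNReal.ofReal (3/2) * T m := hdbl m
        _ ≤ ENNReal.ofReal (3/2) * (ENNReal.ofReal (3/2) ^ m * T 0) :=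
            mul_le_mul_right ih _
        _ = ENNReal.ofReal (3/2) ^ (m+1) * T 0 := by ring
  set A : ℕ → Set V := fun k => {y : V | δ/2^(k+1) < ‖y‖ ∧ ‖y‖ ≤ δ/2^k} with hA
  have hAk : ∀ k, MeasurableSet (A k) := by
    intro k
    exact ((isOpen_lt continuous_const continuous_norm).measurableSet).inter
      ((isClosed_le continuous_norm continuous_const).measurableSet)
  have hcover : {y : V | 0 < ‖y‖ ∧ ‖y‖ ≤ δ} ⊆ ⋃ k, A k := by
    rintro y ⟨hy0, hyδ⟩
    have hP : ∃ k : ℕ, δ/2^(k+1) < ‖y‖ := by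
      obtain ⟨n, hn⟩ := exists_pow_lt_of_lt_one (div_pos hy0 hδ)
        (by norm_num : (1:ℝ)/2 < 1)
      refine ⟨n, ?_⟩
      have h1 : δ * (1/2)^n < ‖y‖ := by
        rw [mul_comm]
        exact (lt_div_iff₀ hδ).1 hn
      have heq : δ * (1/2)^n = δ / 2^n := by
        rw [div_pow, one_pow, mul_one_div]
      have h2 : δ / 2^(n+1) ≤ δ / 2^n := by
        gcongr <;> norm_num
      rw [heq] at h1
      linarith
    set k := Nat.find hP with hk
    have hmem : y ∈ A k := by
      refine ⟨Nat.find_spec hP, ?_⟩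
      match hk2 : k with
      | 0 => simpa using hyδ
      | m+1 =>
        have := Nat.find_min hP (by omega : m < k)
        simpa using le_of_not_gt this
    exact Set.mem_iUnion.2 ⟨k, hmem⟩
  calc ∫⁻ y in {y : V | 0 < ‖y‖ ∧ ‖y‖ ≤ δ}, ENNReal.ofReal ‖y‖ ∂μ
      ≤ ∫⁻ y in ⋃ k, A k, ENNReal.ofReal ‖y‖ ∂μ := lintegral_mono_set hcover
    _ ≤ ∑' k, ∫⁻ y in A k, ENNReal.ofReal ‖y‖ ∂μ := lintegral_iUnion_le _ _
    _ ≤ ∑' k : ℕ, (ENNReal.ofReal δ * T 0 * ENNReal.ofReal (3/2)) * ENNReal.ofReal (3/4) ^ k := by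
        apply ENNReal.tsum_le_tsum
        intro k
        have hstep1 : ∫⁻ y in A k, ENNReal.ofReal ‖y‖ ∂μ
            ≤ ENNReal.ofReal (δ/2^k) * μ (A k) := by
          calc ∫⁻ y in A k, ENNReal.ofReal ‖y‖ ∂μ
              ≤ ∫⁻ _ in A k, ENNReal.ofReal (δ/2^k) ∂μ := by
                apply lintegral_mono_ae
                exact (ae_restrict_iff' (hAk k)).2
                  (ae_of_all _ fun y hy => ENNReal.ofReal_le_ofReal hy.2)
            _ = ENNReal.ofReal (δ/2^k) * μ (A k) := setLIntegral_const _ _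
        have hstep2 : μ (A k) ≤ ENNReal.ofReal (3/2) ^ (k+1) * T 0 :=
          le_trans (measure_mono fun y hy => hy.1) (hTbound (k+1))
        have hof : ENNReal.ofReal (δ/2^k) = ENNReal.ofReal δ * ENNReal.ofReal (1/2) ^ k := by
          rw [← ENNReal.ofReal_pow (by norm_num : (0:ℝ) ≤ 1/2), ← ENNReal.ofReal_mul hδ.le]
          rw [div_pow, one_pow]
          ring_nf
        have hcomb : ENNReal.ofReal (1/2) * ENNReal.ofReal (3/2) = ENNReal.ofReal (3/4) := by
          rw [← ENNReal.ofReal_mul (by norm_num)]; norm_num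
        calc ∫⁻ y in A k, ENNReal.ofReal ‖y‖ ∂μ
            ≤ ENNReal.ofReal (δ/2^k) * (ENNReal.ofReal (3/2) ^ (k+1) * T 0) :=
              le_trans hstep1 (mul_le_mul_right hstep2 _)
          _ = (ENNReal.ofReal δ * T 0 * ENNReal.ofReal (3/2))
                * (ENNReal.ofReal (1/2) * ENNReal.ofReal (3/2)) ^ k := by
              rw [hof]; ring
          _ = (ENNReal.ofReal δ * T 0 * ENNReal.ofReal (3/2)) * ENNReal.ofReal (3/4) ^ k := by
              rw [hcomb]
    _ = (ENNReal.ofReal δ * T 0 * ENNReal.ofReal (3/2)) * (1 - ENNReal.ofReal (3/4))⁻¹ := by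
        rw [ENNReal.tsum_mul_left, ENNReal.tsum_geometric]
    _ = ENNReal.ofReal (6*δ) * T 0 := by
        have h14 : (1 : ℝ≥0∞) - ENNReal.ofReal (3/4) = ENNReal.ofReal (1/4) := by
          rw [← ENNReal.ofReal_one, ← ENNReal.ofReal_sub _ (by norm_num)]
          norm_num
        have h4 : ENNReal.ofReal (6*δ) = ENNReal.ofReal δ * ENNReal.ofReal (3/2)
            * ENNReal.ofReal 4 := by
          rw [← ENNReal.ofReal_mul hδ.le, ← ENNReal.ofReal_mul (by positivity)]
          ring_nf
        rw [h14, ← ENNReal.ofReal_inv_of_pos (by norm_num : (0:ℝ) < 1/4),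
          show ((1:ℝ)/4)⁻¹ = 4 by norm_num, h4]
        ring
    _ = ENNReal.ofReal (6*δ) * μ {x : V | δ < ‖x‖} := by
        rw [hT]; norm_num

end St14

open St14

/-- If the tail function `ℓ(s) = ν({|x| > s})` is finite and positive near zero and
slowly varying at zero, then for the rescaled measures `ν_ε(A) = ν(εA)` and any Borel
set `E` of finite Lebesgue measure with Lipschitz covariance function,
`C_ε⁻¹ Per_{ν_ε}(E) → |E|` where `C_ε = ∫ min(1,|x|) ν_ε(dx)`. -/
theorem statement14 {d : ℕ} (hd : 1 ≤ d)
    (ν : Measure (EuclideanSpace ℝ (Fin d))) (hν0 : ν {0} = 0)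
    (hadm : ∀ ε > (0 : ℝ),
      (∫⁻ x, ENNReal.ofReal (min 1 ‖x‖) ∂(rescale ν ε)) < ⊤)
    (C : ℝ → ℝ≥0∞)
    (hC : ∀ ε, C ε = ∫⁻ x, ENNReal.ofReal (min 1 ‖x‖) ∂(rescale ν ε))
    (hCpos : ∀ ε > (0 : ℝ), 0 < C ε)
    (hℓ : ∃ s₀ > (0 : ℝ), ∀ s ∈ Set.Ioo (0 : ℝ) s₀,
      0 < ν {x | s < ‖x‖} ∧ ν {x | s < ‖x‖} < ⊤)
    (hslow : ∀ c > (0 : ℝ),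
      Tendsto (fun s => ν {x | c * s < ‖x‖} / ν {x | s < ‖x‖})
        (𝓝[>] (0 : ℝ)) (𝓝 1))
    (E : Set (EuclideanSpace ℝ (Fin d)))
    (hE : MeasurableSet E) (hEvol : volume E < ⊤)
    (hLip : ∃ L : ℝ≥0, LipschitzWith L fun y => (covFn E y).toReal) :
    Tendsto (fun ε => (C ε)⁻¹ * nuPer (rescale ν ε) E) (𝓝[>] (0 : ℝ))
      (𝓝 (volume E)) := by
  classical
  set ℓ : ℝ → ℝ≥0∞ := fun s => ν {x | s < ‖x‖} with hℓdef
  -- trivial case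
  by_cases hE0 : volume E = 0
  · have hzero : ∀ ε : ℝ, nuPer (rescale ν ε) E = 0 := by
      intro ε
      unfold nuPer
      rw [Measure.restrict_eq_zero.2 hE0, lintegral_zero_measure]
    simp only [hzero, mul_zero, hE0]
    exact tendsto_const_nhds
  obtain ⟨s₀, hs₀, hℓs₀⟩ := hℓ
  obtain ⟨L, hLipE⟩ := hLip
  have hanti : Antitone ℓ := fun s t hst => measure_mono (fun x hx => lt_of_le_of_lt hst hx)
  have hfin : ∀ s : ℝ, 0 < s → ℓ s < ⊤ := by
    intro s hs
    have hmem : min s s₀ / 2 ∈ Set.Ioo (0:ℝ) s₀ := by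
      constructor
      · have : 0 < min s s₀ := lt_min hs hs₀
        positivity
      · calc min s s₀ / 2 ≤ s₀/2 := by gcongr; exact min_le_right _ _
          _ < s₀ := by linarith
    exact lt_of_le_of_lt (hanti (by
      calc min s s₀ / 2 ≤ s/2 := by gcongr; exact min_le_left _ _
        _ ≤ s := by linarith)) (hℓs₀ _ hmem).2
  have hev_pos : ∀ᶠ s in 𝓝[>] (0:ℝ), 0 < ℓ s ∧ ℓ s < ⊤ :=
    eventually_of_mem (Ioo_mem_nhdsGT_of_mem ⟨le_refl 0, hs₀⟩) (fun s hs => hℓs₀ s hs)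
  have hslow' : ∀ c : ℝ, 0 < c → ∀ θ : ℝ, 0 < θ →
      ∀ᶠ s in 𝓝[>] (0:ℝ),
        ℓ (c*s) ≤ (1 + ENNReal.ofReal θ) * ℓ s ∧ (1 - ENNReal.ofReal θ) * ℓ s ≤ ℓ (c*s) := by
    intro c hc θ hθ
    have h1 := (ENNReal.tendsto_nhds one_ne_top).1 (hslow c hc) (ENNReal.ofReal θ)
      (ENNReal.ofReal_pos.2 hθ)
    filter_upwards [h1, hev_pos] with s hs hpos
    have h0 : ℓ s ≠ 0 := hpos.1.ne'
    have ht : ℓ s ≠ ⊤ := hpos.2.ne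
    constructor
    · have h2 := hs.2
      rwa [ENNReal.div_le_iff h0 ht] at h2
    · have h2 := hs.1
      rwa [ENNReal.le_div_iff_mul_le (Or.inl h0) (Or.inl ht)] at h2
  have htail : ∀ ε : ℝ, 0 < ε → ∀ s : ℝ, rescale ν ε {x : EuclideanSpace ℝ (Fin d) | s < ‖x‖}
      = ℓ (ε * s) := fun ε hε s => rescale_tail ν hε s
  have hsf : ∀ ε : ℝ, 0 < ε → SigmaFinite (rescale ν ε) := by
    intro ε hε
    apply sigmaFinite_of_tails
    · intro s hs
      rw [htail ε hε s]
      exact hfin _ (by positivity)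
    · rw [rescale_zero ν hε]; exact hν0
  -- the key smallness of the integral near the origin
  have hKEY : ∀ M : ℝ, 1 ≤ M → ∀ θ : ℝ, 0 < θ →
      ∀ᶠ ε in 𝓝[>] (0:ℝ),
        (∫⁻ y in {y : EuclideanSpace ℝ (Fin d) | ‖y‖ ≤ M},
          ENNReal.ofReal (min 1 ‖y‖) ∂(rescale ν ε)) ≤ ENNReal.ofReal θ * ℓ ε := by
    intro M hM θ hθ
    set t := min 1 θ with htdef
    have ht0 : 0 < t := lt_min one_pos hθ
    have ht1 : t ≤ 1 := min_le_left _ _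
    set δ := t/24 with hδdef
    have hδ0 : 0 < δ := by positivity
    have hδ1 : δ ≤ 1 := by rw [hδdef]; linarith
    have hδM : δ ≤ M := hδ1.trans hM
    -- doubling scale
    obtain ⟨s₁, hs₁pos, hs₁⟩ : ∃ s₁ > (0:ℝ), ∀ s ∈ Set.Ioo (0:ℝ) s₁,
        ℓ (s/2) ≤ ENNReal.ofReal (3/2) * ℓ s := by
      have hh := hslow' (1/2) (by norm_num) (1/2) (by norm_num)
      obtain ⟨u, hu, huIoo⟩ := mem_nhdsGT_iff_exists_Ioo_subset.1 hh
      refine ⟨u, hu, fun s hs => ?_⟩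
      have := (huIoo hs).1
      have heq : (1:ℝ)/2 * s = s/2 := by ring
      rw [heq] at this
      have hone : (1 : ℝ≥0∞) + ENNReal.ofReal (1/2) = ENNReal.ofReal (3/2) := by
        rw [← ENNReal.ofReal_one, ← ENNReal.ofReal_add (by norm_num) (by norm_num)]
        norm_num
      rwa [hone] at this
    filter_upwards [Ioo_mem_nhdsGT_of_mem (show (0:ℝ) ∈ Set.Ico (0:ℝ) (s₁/δ) from
        ⟨le_refl 0, by positivity⟩),
      hslow' δ hδ0 (t/4) (by positivity), hslow' M (by linarith : (0:ℝ) < M) (t/4) (by positivity),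
      hev_pos, self_mem_nhdsWithin] with ε hεs₁ hsδ hsM hℓε hε
    have hε0 : (0:ℝ) < ε := hε
    have hεδ : ε * δ < s₁ := (lt_div_iff₀ hδ0).1 hεs₁.2
    set νε := rescale ν ε with hνε
    -- small piece
    have hsmall : (∫⁻ y in {y : EuclideanSpace ℝ (Fin d) | ‖y‖ ≤ δ},
        ENNReal.ofReal (min 1 ‖y‖) ∂νε) ≤ ENNReal.ofReal (t/2) * ℓ ε := by
      have hmono1 : (∫⁻ y in {y : EuclideanSpace ℝ (Fin d) | ‖y‖ ≤ δ},
          ENNReal.ofReal (min 1 ‖y‖) ∂νε)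
          ≤ ∫⁻ y in {y : EuclideanSpace ℝ (Fin d) | ‖y‖ ≤ δ}, ENNReal.ofReal ‖y‖ ∂νε :=
        lintegral_mono fun y => ENNReal.ofReal_le_ofReal (min_le_right _ _)
      have hsub : {y : EuclideanSpace ℝ (Fin d) | ‖y‖ ≤ δ}
          ⊆ ({0} : Set (EuclideanSpace ℝ (Fin d)))
            ∪ {y : EuclideanSpace ℝ (Fin d) | 0 < ‖y‖ ∧ ‖y‖ ≤ δ} := by
        intro y hy
        by_cases hy0 : y = 0
        · exact Or.inl hy0
        · exact Or.inr ⟨norm_pos_iff.2 hy0, hy⟩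
      have hdbl : ∀ k : ℕ, νε {x : EuclideanSpace ℝ (Fin d) | δ/2^(k+1) < ‖x‖}
          ≤ ENNReal.ofReal (3/2) * νε {x : EuclideanSpace ℝ (Fin d) | δ/2^k < ‖x‖} := by
        intro k
        rw [htail ε hε0, htail ε hε0]
        have harg : ε * (δ/2^(k+1)) = (ε * (δ/2^k))/2 := by ring
        rw [harg]
        apply hs₁
        constructor
        · positivity
        · have hpow : δ/2^k ≤ δ := by
            calc δ/2^k ≤ δ/1 := by
                  gcongr
                  exact one_le_pow₀ (by norm_num)
              _ = δ := div_one δ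
          calc ε * (δ/2^k) ≤ ε * δ := by gcongr
            _ < s₁ := hεδ
      calc (∫⁻ y in {y : EuclideanSpace ℝ (Fin d) | ‖y‖ ≤ δ},
            ENNReal.ofReal (min 1 ‖y‖) ∂νε)
          ≤ ∫⁻ y in {y : EuclideanSpace ℝ (Fin d) | ‖y‖ ≤ δ}, ENNReal.ofReal ‖y‖ ∂νε := hmono1
        _ ≤ ∫⁻ y in ({0} : Set (EuclideanSpace ℝ (Fin d)))
              ∪ {y : EuclideanSpace ℝ (Fin d) | 0 < ‖y‖ ∧ ‖y‖ ≤ δ},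
            ENNReal.ofReal ‖y‖ ∂νε := lintegral_mono_set hsub
        _ ≤ (∫⁻ y in ({0} : Set (EuclideanSpace ℝ (Fin d))), ENNReal.ofReal ‖y‖ ∂νε)
            + ∫⁻ y in {y : EuclideanSpace ℝ (Fin d) | 0 < ‖y‖ ∧ ‖y‖ ≤ δ},
              ENNReal.ofReal ‖y‖ ∂νε := lintegral_union_le _ _ _
        _ = ∫⁻ y in {y : EuclideanSpace ℝ (Fin d) | 0 < ‖y‖ ∧ ‖y‖ ≤ δ},
              ENNReal.ofReal ‖y‖ ∂νε := by
            rw [lintegral_singleton]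
            simp
        _ ≤ ENNReal.ofReal (6*δ) * νε {x : EuclideanSpace ℝ (Fin d) | δ < ‖x‖} :=
            dyadic_bound νε hδ0 hdbl
        _ = ENNReal.ofReal (6*δ) * ℓ (ε * δ) := by rw [htail ε hε0]
        _ ≤ ENNReal.ofReal (6*δ) * ((1 + ENNReal.ofReal (t/4)) * ℓ ε) := by
            apply mul_le_mul_right
            have := hsδ.1
            rwa [show δ * ε = ε * δ by ring] at this
        _ ≤ ENNReal.ofReal (6*δ) * (2 * ℓ ε) := by
            apply mul_le_mul_right
            apply mul_le_mul_left
            have hx : ENNReal.ofReal (t/4) ≤ 1 := by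
              rw [← ENNReal.ofReal_one]
              exact ENNReal.ofReal_le_ofReal (by linarith)
            rw [show (2:ℝ≥0∞) = 1 + 1 from one_add_one_eq_two.symm]
            exact add_le_add_right hx 1
        _ = ENNReal.ofReal (t/2) * ℓ ε := by
            rw [← mul_assoc]
            congr 1
            rw [show (2:ℝ≥0∞) = ENNReal.ofReal 2 from (ENNReal.ofReal_ofNat 2).symm,
              ← ENNReal.ofReal_mul (by positivity)]
            congr 1
            rw [hδdef]; ring
    -- middle piece
    have hmid : (∫⁻ y in {y : EuclideanSpace ℝ (Fin d) | δ < ‖y‖ ∧ ‖y‖ ≤ M},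
        ENNReal.ofReal (min 1 ‖y‖) ∂νε) ≤ ENNReal.ofReal (t/2) * ℓ ε := by
      have hSm : MeasurableSet {y : EuclideanSpace ℝ (Fin d) | δ < ‖y‖ ∧ ‖y‖ ≤ M} :=
        ((isOpen_lt continuous_const continuous_norm).measurableSet).inter
          ((isClosed_le continuous_norm continuous_const).measurableSet)
      have hδsub : {y : EuclideanSpace ℝ (Fin d) | δ < ‖y‖ ∧ ‖y‖ ≤ M}
          ⊆ {y : EuclideanSpace ℝ (Fin d) | δ < ‖y‖} \ {y : EuclideanSpace ℝ (Fin d) | M < ‖y‖} :=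
        fun y hy => ⟨hy.1, not_lt.2 hy.2⟩
      have hfinM : νε {y : EuclideanSpace ℝ (Fin d) | M < ‖y‖} ≠ ⊤ := by
        rw [htail ε hε0]
        exact (hfin _ (by positivity)).ne
      calc (∫⁻ y in {y : EuclideanSpace ℝ (Fin d) | δ < ‖y‖ ∧ ‖y‖ ≤ M},
            ENNReal.ofReal (min 1 ‖y‖) ∂νε)
          ≤ ∫⁻ _ in {y : EuclideanSpace ℝ (Fin d) | δ < ‖y‖ ∧ ‖y‖ ≤ M}, (1:ℝ≥0∞) ∂νε := by
            apply lintegral_mono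
            intro y
            calc ENNReal.ofReal (min 1 ‖y‖) ≤ ENNReal.ofReal 1 :=
                ENNReal.ofReal_le_ofReal (min_le_left _ _)
              _ = 1 := ENNReal.ofReal_one
        _ = νε {y : EuclideanSpace ℝ (Fin d) | δ < ‖y‖ ∧ ‖y‖ ≤ M} := setLIntegral_one _
        _ ≤ νε ({y : EuclideanSpace ℝ (Fin d) | δ < ‖y‖}
            \ {y : EuclideanSpace ℝ (Fin d) | M < ‖y‖}) := measure_mono hδsub
        _ = νε {y : EuclideanSpace ℝ (Fin d) | δ < ‖y‖}
            - νε {y : EuclideanSpace ℝ (Fin d) | M < ‖y‖} :=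
            measure_diff (fun y hy => lt_of_le_of_lt hδM hy)
              (meas_tail M).nullMeasurableSet hfinM
        _ = ℓ (ε * δ) - ℓ (ε * M) := by rw [htail ε hε0, htail ε hε0]
        _ ≤ (1 + ENNReal.ofReal (t/4)) * ℓ ε - (1 - ENNReal.ofReal (t/4)) * ℓ ε := by
            apply tsub_le_tsub
            · have := hsδ.1
              rwa [show δ * ε = ε * δ by ring] at this
            · have := hsM.2
              rwa [show M * ε = ε * M by ring] at this
        _ ≤ ENNReal.ofReal (t/2) * ℓ ε := by
            rw [tsub_le_iff_right, ← add_mul]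
            apply mul_le_mul_left
            have hi : (1:ℝ≥0∞) - ENNReal.ofReal (t/4) = ENNReal.ofReal (1 - t/4) := by
              rw [ENNReal.ofReal_sub _ (by positivity), ENNReal.ofReal_one]
            rw [hi, ← ENNReal.ofReal_add (by positivity) (by linarith),
              ← ENNReal.ofReal_one, ← ENNReal.ofReal_add (by norm_num) (by positivity)]
            apply ENNReal.ofReal_le_ofReal
            linarith
    -- combine
    have hsplit : {y : EuclideanSpace ℝ (Fin d) | ‖y‖ ≤ M}
        ⊆ {y : EuclideanSpace ℝ (Fin d) | ‖y‖ ≤ δ}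
          ∪ {y : EuclideanSpace ℝ (Fin d) | δ < ‖y‖ ∧ ‖y‖ ≤ M} := by
      intro y hy
      by_cases h : ‖y‖ ≤ δ
      · exact Or.inl h
      · exact Or.inr ⟨not_le.1 h, hy⟩
    calc (∫⁻ y in {y : EuclideanSpace ℝ (Fin d) | ‖y‖ ≤ M},
          ENNReal.ofReal (min 1 ‖y‖) ∂νε)
        ≤ ∫⁻ y in {y : EuclideanSpace ℝ (Fin d) | ‖y‖ ≤ δ}
            ∪ {y : EuclideanSpace ℝ (Fin d) | δ < ‖y‖ ∧ ‖y‖ ≤ M},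
          ENNReal.ofReal (min 1 ‖y‖) ∂νε := lintegral_mono_set hsplit
      _ ≤ (∫⁻ y in {y : EuclideanSpace ℝ (Fin d) | ‖y‖ ≤ δ},
            ENNReal.ofReal (min 1 ‖y‖) ∂νε)
          + ∫⁻ y in {y : EuclideanSpace ℝ (Fin d) | δ < ‖y‖ ∧ ‖y‖ ≤ M},
            ENNReal.ofReal (min 1 ‖y‖) ∂νε := lintegral_union_le _ _ _
      _ ≤ ENNReal.ofReal (t/2) * ℓ ε + ENNReal.ofReal (t/2) * ℓ ε := add_le_add hsmall hmid
      _ = ENNReal.ofReal t * ℓ ε := by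
          rw [← add_mul, ← ENNReal.ofReal_add (by positivity) (by positivity)]
          congr 2
          ring
      _ ≤ ENNReal.ofReal θ * ℓ ε := by
          apply mul_le_mul_left
          exact ENNReal.ofReal_le_ofReal (min_le_right _ _)
    -- decomposition of C
  have hcompl : ∀ M : ℝ, ({y : EuclideanSpace ℝ (Fin d) | ‖y‖ ≤ M})ᶜ
      = {y : EuclideanSpace ℝ (Fin d) | M < ‖y‖} := by
    intro M; ext y; simp [not_le]
  have hCdec : ∀ M : ℝ, 1 ≤ M → ∀ ε : ℝ, 0 < ε →
      C ε = (∫⁻ y in {y : EuclideanSpace ℝ (Fin d) | ‖y‖ ≤ M},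
        ENNReal.ofReal (min 1 ‖y‖) ∂(rescale ν ε)) + ℓ (ε*M) := by
    intro M hM ε hε
    rw [hC ε, ← lintegral_add_compl (μ := rescale ν ε)
      (fun y => ENNReal.ofReal (min 1 ‖y‖)) (meas_ball M)]
    congr 1
    rw [hcompl M]
    have hmin1 : ∀ᵐ y ∂(rescale ν ε), y ∈ {y : EuclideanSpace ℝ (Fin d) | M < ‖y‖}
        → ENNReal.ofReal (min 1 ‖y‖) = (1:ℝ≥0∞) := by
      refine ae_of_all _ fun y hy => ?_
      have : min 1 ‖y‖ = 1 := min_eq_left (by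
        have : M < ‖y‖ := hy
        linarith)
      rw [this, ENNReal.ofReal_one]
    rw [setLIntegral_congr_fun_ae (meas_tail M) hmin1, setLIntegral_one, htail ε hε]
  have hℓleC : ∀ ε : ℝ, 0 < ε → ℓ ε ≤ C ε := by
    intro ε hε
    rw [hCdec 1 le_rfl ε hε]
    calc ℓ ε = ℓ (ε * 1) := by rw [mul_one]
      _ ≤ _ := le_add_self
  -- pointwise bounds on the integrand
  set K : ℝ≥0∞ := max (L : ℝ≥0∞) (volume E) with hK
  have hKtop : K ≠ ⊤ := by
    rw [hK]; exact (max_lt ENNReal.coe_lt_top hEvol).ne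
  set g : EuclideanSpace ℝ (Fin d) → ℝ≥0∞ := fun y => volume E - covFn E (-y) with hg
  have hg_le : ∀ y, g y ≤ volume E := fun y => tsub_le_self
  have hg_le_K : ∀ y, g y ≤ K * ENNReal.ofReal (min 1 ‖y‖) := by
    intro y
    by_cases h1 : ‖y‖ ≤ 1
    · have hL : g y ≤ ENNReal.ofReal (L * ‖y‖) := by
        have := covFn_lip hEvol hLipE (-y)
        rwa [norm_neg] at this
      calc g y ≤ ENNReal.ofReal (L * ‖y‖) := hL
        _ = (L : ℝ≥0∞) * ENNReal.ofReal ‖y‖ := by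
            rw [ENNReal.ofReal_mul L.coe_nonneg, ENNReal.ofReal_coe_nnreal]
        _ ≤ K * ENNReal.ofReal (min 1 ‖y‖) := by
            apply mul_le_mul' (le_max_left _ _)
            apply ENNReal.ofReal_le_ofReal
            rw [min_eq_right h1]
    · push_neg at h1
      have hmin : min 1 ‖y‖ = 1 := min_eq_left h1.le
      calc g y ≤ volume E := hg_le y
        _ ≤ K := le_max_right _ _
        _ = K * ENNReal.ofReal (min 1 ‖y‖) := by rw [hmin, ENNReal.ofReal_one, mul_one]
  -- the limit statement
  rw [ENNReal.tendsto_nhds hEvol.ne]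
  intro η hη
  by_cases hηtop : η = ⊤
  · subst hηtop
    filter_upwards with ε
    constructor
    · simp
    · simp
  have hupper : ∀ᶠ ε in 𝓝[>] (0:ℝ),
      (C ε)⁻¹ * nuPer (rescale ν ε) E ≤ volume E + η := by
    have hK1 : K + 1 ≠ 0 := by simp
    have hK1t : K + 1 ≠ ⊤ := by
      simp [ENNReal.add_eq_top, hKtop]
    have hqut : η / (K+1) ≠ ⊤ := by
      simp [ENNReal.div_eq_top, hηtop, hK1]
    set θu : ℝ := (η / (K+1)).toReal with hθu
    have hθu0 : 0 < θu := ENNReal.toReal_pos (ENNReal.div_pos hη.ne' hK1t).ne' hqut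
    have hKθ : K * ENNReal.ofReal θu ≤ η := by
      rw [hθu, ENNReal.ofReal_toReal hqut]
      calc K * (η/(K+1)) ≤ (K+1) * (η/(K+1)) := mul_le_mul_left le_self_add _
        _ = η := ENNReal.mul_div_cancel hK1 hK1t
    filter_upwards [hKEY 1 le_rfl θu hθu0, self_mem_nhdsWithin, hev_pos] with ε hB hε hℓε
    have hε0 : (0:ℝ) < ε := hε
    haveI := hsf ε hε0
    have hCne : C ε ≠ 0 := (hCpos ε hε0).ne'
    have hCnt : C ε ≠ ⊤ := by rw [hC ε]; exact (hadm ε hε0).ne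
    rw [nuPer_eq _ hE hEvol]
    have hPer : ∫⁻ y, g y ∂(rescale ν ε) ≤ (volume E + η) * C ε := by
      calc ∫⁻ y, g y ∂(rescale ν ε)
          = (∫⁻ y in {y : EuclideanSpace ℝ (Fin d) | ‖y‖ ≤ 1}, g y ∂(rescale ν ε))
            + ∫⁻ y in ({y : EuclideanSpace ℝ (Fin d) | ‖y‖ ≤ 1})ᶜ, g y ∂(rescale ν ε) :=
            (lintegral_add_compl _ (meas_ball 1)).symm
        _ ≤ K * ENNReal.ofReal θu * ℓ ε + volume E * ℓ ε := by
            apply add_le_add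
            · calc ∫⁻ y in {y : EuclideanSpace ℝ (Fin d) | ‖y‖ ≤ 1}, g y ∂(rescale ν ε)
                  ≤ ∫⁻ y in {y : EuclideanSpace ℝ (Fin d) | ‖y‖ ≤ 1},
                      K * ENNReal.ofReal (min 1 ‖y‖) ∂(rescale ν ε) :=
                    lintegral_mono fun y => hg_le_K y
                _ = K * ∫⁻ y in {y : EuclideanSpace ℝ (Fin d) | ‖y‖ ≤ 1},
                      ENNReal.ofReal (min 1 ‖y‖) ∂(rescale ν ε) :=
                    lintegral_const_mul' _ _ hKtop
                _ ≤ K * (ENNReal.ofReal θu * ℓ ε) := mul_le_mul_right hB _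
                _ = K * ENNReal.ofReal θu * ℓ ε := by ring
            · calc ∫⁻ y in ({y : EuclideanSpace ℝ (Fin d) | ‖y‖ ≤ 1})ᶜ, g y ∂(rescale ν ε)
                  ≤ ∫⁻ _ in ({y : EuclideanSpace ℝ (Fin d) | ‖y‖ ≤ 1})ᶜ,
                      volume E ∂(rescale ν ε) := lintegral_mono fun y => hg_le y
                _ = volume E * rescale ν ε (({y : EuclideanSpace ℝ (Fin d) | ‖y‖ ≤ 1})ᶜ) :=
                    setLIntegral_const _ _
                _ = volume E * ℓ ε := by
                    rw [hcompl 1, htail ε hε0, mul_one]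
        _ ≤ η * ℓ ε + volume E * ℓ ε := add_le_add_left (mul_le_mul_left hKθ _) _
        _ = (volume E + η) * ℓ ε := by ring
        _ ≤ (volume E + η) * C ε := mul_le_mul_right (hℓleC ε hε0) _
    calc (C ε)⁻¹ * ∫⁻ y, g y ∂(rescale ν ε) ≤ (C ε)⁻¹ * ((volume E + η) * C ε) :=
        mul_le_mul_right hPer _
      _ = (volume E + η) * ((C ε)⁻¹ * C ε) := by ring
      _ = volume E + η := by rw [ENNReal.inv_mul_cancel hCne hCnt, mul_one]
  have hlower : ∀ᶠ ε in 𝓝[>] (0:ℝ),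
      volume E - η ≤ (C ε)⁻¹ * nuPer (rescale ν ε) E := by
    by_cases hcase : volume E ≤ η
    · filter_upwards with ε
      simp [tsub_eq_zero_of_le hcase]
    push_neg at hcase
    have hη4 : (0:ℝ≥0∞) < η/4 := ENNReal.div_pos hη.ne' (by norm_num)
    have hη4le : η/4 ≤ η := by
      rw [div_eq_mul_inv]
      calc η * 4⁻¹ ≤ η * 1 := mul_le_mul_right (ENNReal.inv_le_one.2 (by norm_num)) _
        _ = η := mul_one η
    obtain ⟨M, hM1, hMtail⟩ := covFn_tail hE hEvol hη4
    have hVE1 : volume E + 1 ≠ 0 := by simp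
    have hVE1t : volume E + 1 ≠ ⊤ := by simp [ENNReal.add_eq_top, hEvol.ne]
    set q : ℝ≥0∞ := η/4 / (volume E + 1) with hq
    have hqne : q ≠ 0 := by
      rw [hq, Ne, ENNReal.div_eq_zero_iff]
      push_neg
      exact ⟨hη4.ne', hVE1t⟩
    have hqt : q ≠ ⊤ := by
      rw [hq]
      simp [ENNReal.div_eq_top, hηtop]
    set θl : ℝ := q.toReal with hθl
    have hθl0 : 0 < θl := ENNReal.toReal_pos hqne hqt
    have hofq : ENNReal.ofReal θl = q := ENNReal.ofReal_toReal hqt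
    have hVq : volume E * q ≤ η/4 := by
      calc volume E * q ≤ (volume E + 1) * q := mul_le_mul_left le_self_add _
        _ = η/4 := ENNReal.mul_div_cancel hVE1 hVE1t
    have hq1 : q ≤ 1 := by
      rw [hq, ENNReal.div_le_iff hVE1 hVE1t, one_mul]
      calc η/4 ≤ η := hη4le
        _ ≤ volume E := hcase.le
        _ ≤ volume E + 1 := le_self_add
    have hscal : (volume E - η) * (1 + q) ≤ (volume E - η/4) * (1 - q) := by
      have hLt : (volume E - η) * (1 + q) ≠ ⊤ :=
        ENNReal.mul_ne_top (tsub_le_self.trans_lt hEvol).ne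
          (by simp [ENNReal.add_eq_top, hqt])
      have hRt : (volume E - η/4) * (1 - q) ≠ ⊤ :=
        ENNReal.mul_ne_top (tsub_le_self.trans_lt hEvol).ne
          (tsub_le_self.trans_lt (by norm_num : (1:ℝ≥0∞) < ⊤)).ne
      refine (ENNReal.toReal_le_toReal hLt hRt).1 ?_
      rw [ENNReal.toReal_mul, ENNReal.toReal_mul,
        ENNReal.toReal_sub_of_le hcase.le hEvol.ne,
        ENNReal.toReal_sub_of_le (hη4le.trans hcase.le) hEvol.ne,
        ENNReal.toReal_add one_ne_top hqt,
        ENNReal.toReal_sub_of_le hq1 one_ne_top, ENNReal.toReal_one]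
      have ha0 : (0:ℝ) ≤ (volume E).toReal := ENNReal.toReal_nonneg
      have hh0 : (0:ℝ) ≤ η.toReal := ENNReal.toReal_nonneg
      have hha : η.toReal ≤ (volume E).toReal :=
        (ENNReal.toReal_le_toReal hηtop hEvol.ne).2 hcase.le
      have hq4 : (η/4).toReal = η.toReal/4 := by
        rw [ENNReal.toReal_div]
        norm_num
      have haq : (volume E).toReal * θl ≤ η.toReal/4 := by
        have := (ENNReal.toReal_le_toReal
          (ENNReal.mul_ne_top hEvol.ne hqt) (by simp [ENNReal.div_eq_top, hηtop])).2 hVq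
        rwa [ENNReal.toReal_mul, hq4] at this
      rw [hq4]
      nlinarith [mul_nonneg hθl0.le hh0, hθl0.le]
    filter_upwards [hKEY M hM1 θl hθl0, hslow' M (by linarith) θl hθl0,
      self_mem_nhdsWithin, hev_pos] with ε hB hsM hε hℓε
    have hε0 : (0:ℝ) < ε := hε
    haveI := hsf ε hε0
    have hCne : C ε ≠ 0 := (hCpos ε hε0).ne'
    have hCnt : C ε ≠ ⊤ := by rw [hC ε]; exact (hadm ε hε0).ne
    rw [nuPer_eq _ hE hEvol]
    rw [hofq] at hB hsM
    have hPer : (volume E - η/4) * ((1 - q) * ℓ ε) ≤ ∫⁻ y, g y ∂(rescale ν ε) := by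
      have h1 : (1 - q) * ℓ ε ≤ ℓ (ε*M) := by
        have h2 := hsM.2
        rwa [show M * ε = ε * M by ring] at h2
      calc (volume E - η/4) * ((1-q) * ℓ ε) ≤ (volume E - η/4) * ℓ (ε*M) :=
          mul_le_mul_right h1 _
        _ = ∫⁻ _ in {y : EuclideanSpace ℝ (Fin d) | M < ‖y‖},
            (volume E - η/4) ∂(rescale ν ε) := by
            rw [setLIntegral_const, htail ε hε0]
        _ ≤ ∫⁻ y in {y : EuclideanSpace ℝ (Fin d) | M < ‖y‖}, g y ∂(rescale ν ε) := by
            apply lintegral_mono_ae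
            refine (ae_restrict_iff' (meas_tail M)).2 (ae_of_all _ fun y hy => ?_)
            exact tsub_le_tsub_left (hMtail (-y) (by rw [norm_neg]; exact le_of_lt hy)) _
        _ ≤ ∫⁻ y, g y ∂(rescale ν ε) := setLIntegral_le_lintegral _ _
    have hCub : C ε ≤ (1 + q) * ℓ ε := by
      rw [hCdec M hM1 ε hε0]
      refine le_trans (add_le_add hB (hanti (le_mul_of_one_le_right hε0.le hM1)))
        (le_of_eq ?_)
      ring
    have hfinal : (volume E - η) * C ε ≤ (volume E - η/4) * ((1-q) * ℓ ε) := by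
      calc (volume E - η) * C ε ≤ (volume E - η) * ((1+q) * ℓ ε) := mul_le_mul_right hCub _
        _ = ((volume E - η) * (1+q)) * ℓ ε := by ring
        _ ≤ ((volume E - η/4) * (1-q)) * ℓ ε := mul_le_mul_left hscal _
        _ = (volume E - η/4) * ((1-q) * ℓ ε) := by ring
    calc volume E - η = (C ε)⁻¹ * ((volume E - η) * C ε) := by
          rw [mul_comm (volume E - η) (C ε), ← mul_assoc,
            ENNReal.inv_mul_cancel hCne hCnt, one_mul]
      _ ≤ (C ε)⁻¹ * ((volume E - η/4) * ((1-q) * ℓ ε)) := mul_le_mul_right hfinal _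
      _ ≤ (C ε)⁻¹ * ∫⁻ y, g y ∂(rescale ν ε) := mul_le_mul_right hPer _
  filter_upwards [hupper, hlower] with ε h1 h2
  exact ⟨h2, h1⟩
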